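/- Let m > 1 and β = m. If z ∈ ℂ satisfies sin(mπz) = m·sin(πz) and mπ·cos(mπz) = mπ·cos(πz) (i.e., z is a multiple root of p_m(z) = sin(mπz) - m·sin(πz)), then cos(πz) = cos(mπz) = ±1, so that z and mz are both integers of the same parity. -/

import Mathlib

open Complex Real

theorem multiple_root_beta_eq_m (m : ℝ) (hm : 1 < m) (z : ℂ)
    (h1 : Complex.sin (m * Real.pi * z) = m * Complex.sin (Real.pi * z))
    (h2 : m * Real.pi * Complex.cos (m * Real.pi * z)
            = m * Real.pi * Complex.cos (Real.pi * z)) :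
    ((Complex.cos (Real.pi * z) = 1 ∧ Complex.cos (m * Real.pi * z) = 1) ∨
     (Complex.cos (Real.pi * z) = -1 ∧ Complex.cos (m * Real.pi * z) = -1)) ∧
    ∃ a b : ℤ, z = (a : ℂ) ∧ (m : ℂ) * z = (b : ℂ) ∧ (Even a ↔ Even b) := by
  have hpi : (Real.pi : ℂ) ≠ 0 := by exact_mod_cast Real.pi_ne_zero
  have hm0 : (m : ℂ) ≠ 0 := by
    have : m ≠ 0 := by linarith
    exact_mod_cast this
  have hc : Complex.cos (m * Real.pi * z) = Complex.cos (Real.pi * z) :=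
    mul_left_cancel₀ (mul_ne_zero hm0 hpi) h2
  have e1 := Complex.sin_sq_add_cos_sq (m * Real.pi * z)
  have e2 := Complex.sin_sq_add_cos_sq (Real.pi * z)
  have key : ((m : ℂ) ^ 2 - 1) * Complex.sin (Real.pi * z) ^ 2 = 0 := by
    linear_combination -(Complex.sin (m * Real.pi * z) + m * Complex.sin (Real.pi * z)) * h1
      + e1 - e2 - (Complex.cos (m * Real.pi * z) + Complex.cos (Real.pi * z)) * hc
  have hm1 : ((m : ℂ) ^ 2 - 1) ≠ 0 := by
    have : (m : ℝ) ^ 2 - 1 ≠ 0 := by nlinarith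
    exact_mod_cast this
  have hs : Complex.sin (Real.pi * z) = 0 := by
    have h0 := (mul_eq_zero.1 key).resolve_left hm1
    exact pow_eq_zero_iff (n := 2) (by norm_num) |>.1 h0
  rcases Complex.sin_eq_zero_iff_cos_eq.1 hs with h | h
  · refine ⟨Or.inl ⟨h, hc.trans h⟩, ?_⟩
    obtain ⟨k, hk⟩ := Complex.cos_eq_one_iff.1 h
    obtain ⟨j, hj⟩ := Complex.cos_eq_one_iff.1 (hc.trans h)
    refine ⟨2 * k, 2 * j, ?_, ?_, by simp [Int.even_mul]⟩
    · refine mul_left_cancel₀ hpi ?_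
      push_cast
      linear_combination -hk
    · refine mul_left_cancel₀ hpi ?_
      push_cast
      linear_combination -hj
  · refine ⟨Or.inr ⟨h, hc.trans h⟩, ?_⟩
    obtain ⟨k, hk⟩ := Complex.cos_eq_neg_one_iff.1 h
    obtain ⟨j, hj⟩ := Complex.cos_eq_neg_one_iff.1 (hc.trans h)
    refine ⟨2 * k + 1, 2 * j + 1, ?_, ?_, by simp [Int.even_add_one, parity_simps, Int.odd_mul]⟩
    · refine mul_left_cancel₀ hpi ?_
      push_cast
      linear_combination -hk
    · refine mul_left_cancel₀ hpi ?_
      push_cast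
      linear_combination -hj
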